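/- Let n, r ≤ n and even k be positive integers, and let Δ⃗ = (Δ_1,…,Δ_n) be a nonincreasing sequence of nonnegative reals with Δ_n = 0 and Δ_{n−r+1} ≤ √(k/r) < 1. For each w ∈ {0,1}^{k/2}, define S_w = P_{w,1} × ⋯ × P_{w,n} by P_{w,i}(j) = 1/k for i ≤ n−r and P_{w,i}(j) = 1/k + (−1)^j · w_{⌈j/2⌉} · (Δ_{n−r+1} − Δ_i)/k for i > n−r. Let w, w′ ∈ {0,1}^{k/2} with Hamming distance h(w,w′) = 1, differing in the bit q with w_q = 1 and w′_q = 0. Then KL(S_w ‖ S_{w′}) ≤ 2, where KL is the Kullback–Leibler divergence between the product distributions on [k]^n. -/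

import Mathlib

open Finset

/-- Kullback–Leibler divergence between two pmfs on `Fin k`:
`KL(p‖q) = ∑_j p j · log (p j / q j)`. -/
noncomputable def klFin {k : ℕ} (p q : Fin k → ℝ) : ℝ :=
  ∑ j, p j * Real.log (p j / q j)

/-- The lower-bound construction: for `w ∈ {0,1}^{k/2}` (here `k = 2k'`), the `i`-th
distribution (1-based) of `S_w`. The element `j ∈ [k]` is represented by `j.val + 1`, so
`(−1)^j = (−1)^{j.val+1}` and `w_{⌈j/2⌉}` is `w ⟨j.val/2, _⟩`. -/
noncomputable def lbP (n r k' : ℕ) (Δ : ℕ → ℝ) (w : Fin k' → Bool) (i : ℕ)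
    (j : Fin (2 * k')) : ℝ :=
  if i ≤ n - r then 1 / (2 * (k' : ℝ))
  else 1 / (2 * (k' : ℝ)) +
    (if w ⟨j.1 / 2, by omega⟩ then
      (-1 : ℝ) ^ (j.1 + 1) * (Δ (n - r + 1) - Δ i) / (2 * (k' : ℝ))
    else 0)

-- Lemma A : entropy-type bound
lemma lemA (δ : ℝ) (h0 : 0 ≤ δ) (h1 : δ < 1) :
    (1 - δ) * Real.log (1 - δ) + (1 + δ) * Real.log (1 + δ) ≤ 2 * δ ^ 2 := by
  have hm : Real.log (1 - δ) ≤ -δ := by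
    have := Real.log_le_sub_one_of_pos (x := 1 - δ) (by linarith)
    linarith
  have hp : Real.log (1 + δ) ≤ δ := by
    have := Real.log_le_sub_one_of_pos (x := 1 + δ) (by linarith)
    linarith
  have h1' : (1 - δ) * Real.log (1 - δ) ≤ (1 - δ) * (-δ) :=
    mul_le_mul_of_nonneg_left hm (by linarith)
  have h2' : (1 + δ) * Real.log (1 + δ) ≤ (1 + δ) * δ :=
    mul_le_mul_of_nonneg_left hp (by linarith)
  nlinarith

-- klFin equals 0 when distributions equal constant
lemma kl_zero_of_le (n r k' i : ℕ) (hk' : 0 < k') (Δ : ℕ → ℝ) (w w' : Fin k' → Bool)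
    (hi : i ≤ n - r) :
    klFin (lbP n r k' Δ w i) (lbP n r k' Δ w' i) = 0 := by
  have h1 : (1 : ℝ) / (2 * k') / ((1 : ℝ) / (2 * k')) = 1 := div_self (by positivity)
  unfold klFin lbP
  simp [hi]

lemma kl_formula (n r k' i : ℕ) (hk' : 0 < k') (Δ : ℕ → ℝ)
    (w w' : Fin k' → Bool) (q : Fin k')
    (hq : w q = true) (hq' : w' q = false)
    (hsame : ∀ j : Fin k', j ≠ q → w j = w' j)
    (hi : ¬ i ≤ n - r) :
    klFin (lbP n r k' Δ w i) (lbP n r k' Δ w' i)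
      = ((1 - (Δ (n - r + 1) - Δ i)) * Real.log (1 - (Δ (n - r + 1) - Δ i))
        + (1 + (Δ (n - r + 1) - Δ i)) * Real.log (1 + (Δ (n - r + 1) - Δ i)))
        / (2 * (k' : ℝ)) := by
  set δ := Δ (n - r + 1) - Δ i with hδ
  have hk0 : (0 : ℝ) < 2 * (k' : ℝ) := by positivity
  set f : Fin (2 * k') → ℝ :=
    fun j => lbP n r k' Δ w i j * Real.log (lbP n r k' Δ w i j / lbP n r k' Δ w' i j)
    with hf
  have j0 : Fin (2 * k') := ⟨2 * q.1, by omega⟩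
  have hq2 : 2 * q.1 + 1 < 2 * k' := by omega
  have key : ∀ j : Fin (2 * k'), j.1 ≠ 2 * q.1 → j.1 ≠ 2 * q.1 + 1 → f j = 0 := by
    intro j hj0 hj1
    have hjlt := j.2
    have hne : (⟨j.1 / 2, by omega⟩ : Fin k') ≠ q := by
      intro h
      have : j.1 / 2 = q.1 := congrArg Fin.val h
      omega
    have : lbP n r k' Δ w i j = lbP n r k' Δ w' i j := by
      unfold lbP
      rw [hsame _ hne]
    simp only [hf, this]
    rcases eq_or_ne (lbP n r k' Δ w' i j) 0 with h | h
    · simp [h]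
    · rw [div_self h, Real.log_one, mul_zero]
  have hsum : klFin (lbP n r k' Δ w i) (lbP n r k' Δ w' i)
      = f ⟨2 * q.1, by omega⟩ + f ⟨2 * q.1 + 1, hq2⟩ := by
    unfold klFin
    rw [← Finset.sum_pair (a := (⟨2 * q.1, by omega⟩ : Fin (2 * k')))
      (b := ⟨2 * q.1 + 1, hq2⟩) (Fin.ne_of_val_ne (by omega : (2 * q.1 : ℕ) ≠ 2 * q.1 + 1))]
    symm
    apply Finset.sum_subset (Finset.subset_univ _)
    intro j _ hj
    simp only [Finset.mem_insert, Finset.mem_singleton] at hj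
    push_neg at hj
    exact key j (fun h => hj.1 (Fin.ext h)) (fun h => hj.2 (Fin.ext h))
  -- evaluate the two terms
  have hdiv0 : (2 * q.1) / 2 = q.1 := by omega
  have hdiv1 : (2 * q.1 + 1) / 2 = q.1 := by omega
  have e0 : f ⟨2 * q.1, by omega⟩ = (1 - δ) / (2 * (k' : ℝ)) * Real.log (1 - δ) := by
    have hw : w ⟨(2 * q.1) / 2, by omega⟩ = true := by
      have : (⟨(2 * q.1) / 2, by omega⟩ : Fin k') = q := Fin.ext hdiv0
      rw [this, hq]
    have hw' : w' ⟨(2 * q.1) / 2, by omega⟩ = false := by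
      have : (⟨(2 * q.1) / 2, by omega⟩ : Fin k') = q := Fin.ext hdiv0
      rw [this, hq']
    have hpow : (-1 : ℝ) ^ (2 * q.1 + 1) = -1 := by
      rw [pow_succ, pow_mul]; norm_num
    have harg : (1 / (2 * (k':ℝ)) + -1 * δ / (2 * (k':ℝ))) / (1 / (2 * (k':ℝ)) + 0)
        = 1 - δ := by field_simp; ring
    simp only [hf, lbP, hi, if_false, hw, hw', if_true, Bool.false_eq_true, hpow, ← hδ]
    rw [harg]
    ring
  have e1 : f ⟨2 * q.1 + 1, hq2⟩ = (1 + δ) / (2 * (k' : ℝ)) * Real.log (1 + δ) := by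
    have hw : w ⟨(2 * q.1 + 1) / 2, by omega⟩ = true := by
      have : (⟨(2 * q.1 + 1) / 2, by omega⟩ : Fin k') = q := Fin.ext hdiv1
      rw [this, hq]
    have hw' : w' ⟨(2 * q.1 + 1) / 2, by omega⟩ = false := by
      have : (⟨(2 * q.1 + 1) / 2, by omega⟩ : Fin k') = q := Fin.ext hdiv1
      rw [this, hq']
    have hpow : (-1 : ℝ) ^ (2 * q.1 + 1 + 1) = 1 := by
      rw [pow_succ, pow_succ, pow_mul]; norm_num
    have harg : (1 / (2 * (k':ℝ)) + 1 * δ / (2 * (k':ℝ))) / (1 / (2 * (k':ℝ)) + 0)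
        = 1 + δ := by field_simp; ring
    simp only [hf, lbP, hi, if_false, hw, hw', if_true, Bool.false_eq_true, hpow, ← hδ]
    rw [harg]
    ring
  rw [hsum, e0, e1]
  ring

/-- Proposition 4.8. If `w, w′ ∈ {0,1}^{k/2}` differ exactly in the bit `q`,
with `w_q = 1` and `w′_q = 0`, then the KL divergence between the product distributions
`S_w` and `S_{w′}` (which factorizes as the sum of the componentwise KL divergences)
is at most `2`. -/
theorem stmt10 (n r k' : ℕ) (hn : 0 < n) (hk' : 0 < k') (hr1 : 1 ≤ r) (hrn : r ≤ n)
    (Δ : ℕ → ℝ)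
    (hnonneg : ∀ i ∈ Finset.Icc 1 n, 0 ≤ Δ i)
    (hmono : ∀ i ∈ Finset.Icc 1 (n - 1), Δ (i + 1) ≤ Δ i)
    (hΔn : Δ n = 0)
    (hΔr : Δ (n - r + 1) ≤ Real.sqrt ((2 * (k' : ℝ)) / r))
    (hlt1 : Real.sqrt ((2 * (k' : ℝ)) / r) < 1)
    (w w' : Fin k' → Bool) (q : Fin k')
    (hq : w q = true) (hq' : w' q = false)
    (hsame : ∀ j : Fin k', j ≠ q → w j = w' j) :
    ∑ i ∈ Finset.Icc 1 n, klFin (lbP n r k' Δ w i) (lbP n r k' Δ w' i) ≤ 2 := by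
  have hr0 : (0 : ℝ) < r := by exact_mod_cast hr1
  have hk0 : (0 : ℝ) < 2 * (k' : ℝ) := by positivity
  have hanti : ∀ b, b ≤ n → ∀ a, 1 ≤ a → a ≤ b → Δ b ≤ Δ a := by
    intro b
    induction b with
    | zero => intro _ a ha hab; omega
    | succ m ih =>
      intro hb a ha hab
      rcases eq_or_lt_of_le hab with h | h
      · rw [h]
      · have ham : a ≤ m := by omega
        have h1m : 1 ≤ m := le_trans ha ham
        have hstep : Δ (m + 1) ≤ Δ m :=
          hmono m (Finset.mem_Icc.mpr ⟨h1m, by omega⟩)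
        exact le_trans hstep (ih (by omega) a ha ham)
  have hmem1 : n - r + 1 ∈ Finset.Icc 1 n := Finset.mem_Icc.mpr ⟨by omega, by omega⟩
  have hbound : ∀ i ∈ Finset.Icc 1 n,
      klFin (lbP n r k' Δ w i) (lbP n r k' Δ w' i)
        ≤ if i ≤ n - r then (0:ℝ) else 2 / (r:ℝ) := by
    intro i hi
    rw [Finset.mem_Icc] at hi
    by_cases hile : i ≤ n - r
    · simp only [hile, if_true]
      rw [kl_zero_of_le n r k' i hk' Δ w w' hile]
    · simp only [hile, if_false]
      set δ := Δ (n - r + 1) - Δ i with hδdef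
      have hΔile : Δ i ≤ Δ (n - r + 1) := hanti i hi.2 (n - r + 1) (by omega) (by omega)
      have hΔi0 : 0 ≤ Δ i := hnonneg i (Finset.mem_Icc.mpr hi)
      have hδ0 : 0 ≤ δ := by simp [hδdef]; linarith
      have hδle : δ ≤ Real.sqrt ((2 * (k' : ℝ)) / r) := by
        have := hnonneg _ hmem1
        simp only [hδdef]; linarith
      have hδ1 : δ < 1 := lt_of_le_of_lt hδle hlt1
      have hδsq : δ ^ 2 ≤ 2 * (k' : ℝ) / r := by
        have hnn : (0 : ℝ) ≤ 2 * (k' : ℝ) / r := by positivity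
        have := pow_le_pow_left₀ hδ0 hδle 2
        rwa [Real.sq_sqrt hnn] at this
      rw [kl_formula n r k' i hk' Δ w w' q hq hq' hsame hile, ← hδdef]
      calc ((1 - δ) * Real.log (1 - δ) + (1 + δ) * Real.log (1 + δ)) / (2 * (k' : ℝ))
          ≤ (2 * δ ^ 2) / (2 * (k' : ℝ)) := by
            gcongr
            exact lemA δ hδ0 hδ1
        _ ≤ (2 * (2 * (k' : ℝ) / r)) / (2 * (k' : ℝ)) := by gcongr
        _ = 2 / r := by field_simp
  calc ∑ i ∈ Finset.Icc 1 n, klFin (lbP n r k' Δ w i) (lbP n r k' Δ w' i)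
      ≤ ∑ i ∈ Finset.Icc 1 n, (if i ≤ n - r then (0 : ℝ) else 2 / r) :=
        Finset.sum_le_sum hbound
    _ = 2 := by
        rw [Finset.sum_ite, Finset.sum_const_zero, zero_add, Finset.sum_const]
        have hfil : Finset.filter (fun i => ¬ i ≤ n - r) (Finset.Icc 1 n)
            = Finset.Icc (n - r + 1) n := by
          ext x
          simp only [Finset.mem_filter, Finset.mem_Icc, not_le]
          omega
        rw [hfil, Nat.card_Icc]
        have hcard : n + 1 - (n - r + 1) = r := by omega
        rw [hcard, nsmul_eq_mul]
        field_simp
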